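/- For every type expression M over parameterised regular type definitions Δ (built from type constructors in Π, ⊤, ⊥, and the set operators ∧, ∨, ¬), the denotation ⟦M⟧ is a regular term language over Σ, i.e., is recognisable by a finite tree automaton. -/

import Mathlib

/-- Ground terms over a ranked alphabet `F`. -/
inductive Tm (F : Type) : Type
  | app : F → List (Tm F) → Tm F

/-- Type expressions over type constructors `C`, built from constructors, `⊤`,
`⊥` and the set operators `∧`, `∨`, `¬`. -/
inductive TE (C : Type) : Type
  | top : TE C
  | bot : TE C
  | con : C → List (TE C) → TE C
  | and : TE C → TE C → TE C
  | or : TE C → TE C → TE C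
  | not : TE C → TE C

/-- An argument of the right-hand side of a simplified type rule: a type
parameter `ζᵢ` or a constructor applied to type parameters `d(ζ'₁,…,ζ'_k)`. -/
inductive Arg (C : Type) : Type
  | param : ℕ → Arg C
  | con : C → List ℕ → Arg C

/-- A simplified parametric type rule `c(ζ₁,…,ζₘ) → f(τ₁,…,τₙ)`. -/
structure Rule (C F : Type) where
  c : C
  f : F
  args : List (Arg C)

/-- Instantiation of a rule argument under a type valuation `Es`. -/
def substArg {C : Type} (a : Arg C) (Es : List (TE C)) : TE C :=
  match a with
  | .param i => Es.getD i .top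
  | .con d is => .con d (is.map fun i => Es.getD i .top)

/-- `mem Δ t E` means `t ∈ ⟦E⟧`: `⟦⊤⟧` is all terms, `⟦⊥⟧ = ∅`, the set operators
are interpreted as usual, and `⟦c(E₁,…,Eₘ)⟧` is the union, over ground instances
of the rules of `Δ` with left-hand side `c(E₁,…,Eₘ)`, of
`{f(t₁,…,tₙ) | tᵢ ∈ ⟦τᵢ⟧}` where the `τᵢ` are the instantiated rule arguments. -/
def mem {C F : Type} (Δ : List (Rule C F)) : Tm F → TE C → Prop
  | _, .top => True
  | _, .bot => False
  | t, .and a b => mem Δ t a ∧ mem Δ t b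
  | t, .or a b => mem Δ t a ∨ mem Δ t b
  | t, .not a => ¬ mem Δ t a
  | .app f ts, .con c Es =>
      ∃ r ∈ Δ, r.c = c ∧ r.f = f ∧ r.args.length = ts.length ∧
        ∀ p ∈ ts.zip (r.args.map (substArg · Es)), mem Δ p.1 p.2
  termination_by t E => (sizeOf t, sizeOf E)
  decreasing_by
    all_goals simp_wf
    · exact Prod.Lex.right _ (by omega)
    · exact Prod.Lex.right _ (by omega)
    · exact Prod.Lex.right _ (by omega)
    · exact Prod.Lex.right _ (by omega)
    · exact Prod.Lex.right _ (by omega)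
    · exact Prod.Lex.left _ _ (by
        have hmem : p.1 ∈ ts := (List.of_mem_zip (by assumption)).1
        have := List.sizeOf_lt_of_mem hmem
        omega)

/-- Well-formed ground terms over the ranked alphabet `F`: every function symbol
is applied to a number of arguments equal to its arity. -/
inductive WF {F : Type} (ar : F → ℕ) : Tm F → Prop
  | app {f : F} {ts : List (Tm F)} :
      ts.length = ar f → (∀ t ∈ ts, WF ar t) → WF ar (.app f ts)

/-- A (bottom-up) run of a tree automaton with transition relation `δ`:
`Reach δ t q` holds if the automaton can reach state `q` at the root of `t`. -/
inductive Reach {F Q : Type} (δ : F → List Q → Q → Prop) : Tm F → Q → Prop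
  | app {f : F} {ts : List (Tm F)} {qs : List Q} {q : Q} :
      ts.length = qs.length → (∀ p ∈ ts.zip qs, Reach δ p.1 p.2) →
      δ f qs q → Reach δ (.app f ts) q

/-- A set of ground terms is a regular term language if it is recognised by a
finite (bottom-up) tree automaton: finitely many states `Q`, an arity-respecting
transition relation `δ`, and a set of final states. -/
def Regular {F : Type} (ar : F → ℕ) (L : Set (Tm F)) : Prop :=
  ∃ (Q : Type) (_ : Finite Q) (δ : F → List Q → Q → Prop) (final : Set Q),
    (∀ f qs q, δ f qs q → qs.length = ar f) ∧
    ∀ t, t ∈ L ↔ ∃ q ∈ final, Reach δ t q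

section Aux
variable {C F : Type}

theorem le_foldr_max {l : List ℕ} {a : ℕ} (h : a ∈ l) : a ≤ l.foldr max 0 := by
  induction l with
  | nil => simp at h
  | cons b l ih =>
    rcases List.mem_cons.1 h with rfl | h
    · exact le_max_left _ _
    · exact le_trans (ih h) (le_max_right _ _)

theorem forall_zip_iff {α β : Type*} {l₁ : List α} {l₂ : List β} (h : l₂.length = l₁.length)
    {P : α → β → Prop} :
    (∀ p ∈ l₁.zip l₂, P p.1 p.2) ↔ ∀ (i : ℕ) (hi : i < l₁.length),
      P l₁[i] (l₂[i]'(by omega)) := by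
  constructor
  · intro H i hi
    have hz : i < (l₁.zip l₂).length := by simp [List.length_zip]; omega
    have := H ((l₁.zip l₂)[i]) (List.getElem_mem hz)
    simpa [List.getElem_zip] using this
  · intro H p hp
    rw [List.mem_iff_getElem] at hp
    obtain ⟨i, hi, rfl⟩ := hp
    have hi' : i < l₁.length := by simp [List.length_zip] at hi; omega
    simpa [List.getElem_zip] using H i hi'

def subs : TE C → List (TE C)
  | .top => [.top]
  | .bot => [.bot]
  | .con c Es => .con c Es :: Es.attach.flatMap (fun x => subs x.1)
  | .and a b => .and a b :: (subs a ++ subs b)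
  | .or a b => .or a b :: (subs a ++ subs b)
  | .not a => .not a :: subs a
  decreasing_by
    all_goals simp_wf <;> first
      | (have := List.sizeOf_lt_of_mem x.2; omega)
      | omega

theorem self_mem_subs (E : TE C) : E ∈ subs E := by
  cases E <;> simp [subs]

theorem subs_trans (E : TE C) : ∀ E' ∈ subs E, ∀ x ∈ subs E', x ∈ subs E := by
  match E with
  | .top =>
    intro E' h x hx
    simp [subs] at h; subst h; simpa [subs] using hx
  | .bot =>
    intro E' h x hx
    simp [subs] at h; subst h; simpa [subs] using hx
  | .con c Es =>
    intro E' h x hx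
    simp [subs] at h ⊢
    rcases h with rfl | ⟨y, hy, h⟩
    · simpa [subs] using hx
    · right; exact ⟨y, hy, subs_trans y E' (by simpa using h) x hx⟩
  | .and a b =>
    intro E' h x hx
    simp [subs] at h ⊢
    rcases h with rfl | h | h
    · simpa [subs] using hx
    · right; left; exact subs_trans a E' h x hx
    · right; right; exact subs_trans b E' h x hx
  | .or a b =>
    intro E' h x hx
    simp [subs] at h ⊢
    rcases h with rfl | h | h
    · simpa [subs] using hx
    · right; left; exact subs_trans a E' h x hx
    · right; right; exact subs_trans b E' h x hx
  | .not a =>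
    intro E' h x hx
    simp [subs] at h ⊢
    rcases h with rfl | h
    · simpa [subs] using hx
    · right; exact subs_trans a E' h x hx
  termination_by sizeOf E
  decreasing_by
    all_goals simp_wf <;> first
      | (have := List.sizeOf_lt_of_mem hy; omega)
      | omega

end Aux

def listsExact {α : Type} (P : List α) : ℕ → List (List α)
  | 0 => [[]]
  | n+1 => P.flatMap fun a => (listsExact P n).map (a :: ·)

def listsLE {α : Type} (P : List α) (n : ℕ) : List (List α) :=
  (List.range (n+1)).flatMap (listsExact P)

theorem mem_listsExact {α : Type} {P : List α} :
    ∀ {n : ℕ} {L : List α}, L.length = n → (∀ x ∈ L, x ∈ P) → L ∈ listsExact P n := by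
  intro n
  induction n with
  | zero => intro L hlen _; rw [List.length_eq_zero_iff] at hlen; subst hlen; simp [listsExact]
  | succ n ih =>
    intro L hlen hx
    match L with
    | a :: L =>
      simp [listsExact]
      exact ⟨hx a (by simp), ih (by simpa using hlen) (fun x h => hx x (by simp [h]))⟩

theorem of_mem_listsExact {α : Type} {P : List α} :
    ∀ {n : ℕ} {L : List α}, L ∈ listsExact P n → ∀ x ∈ L, x ∈ P
  | 0, L => by intro h; simp [listsExact] at h; subst h; simp
  | n+1, L => by
    intro h x hx
    simp [listsExact] at h
    obtain ⟨a, ha, L', hL', rfl⟩ := h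
    rcases List.mem_cons.1 hx with rfl | hx
    · exact ha
    · exact of_mem_listsExact hL' x hx

theorem mem_listsLE {α : Type} {P : List α} {n : ℕ} {L : List α}
    (h : L.length ≤ n) (hx : ∀ x ∈ L, x ∈ P) : L ∈ listsLE P n := by
  simp [listsLE]
  exact ⟨L.length, by omega, mem_listsExact rfl hx⟩

theorem of_mem_listsLE {α : Type} {P : List α} {n : ℕ} {L : List α}
    (h : L ∈ listsLE P n) : ∀ x ∈ L, x ∈ P := by
  simp [listsLE] at h
  obtain ⟨k, _, hk⟩ := h
  exact of_mem_listsExact hk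

set_option linter.unusedSectionVars false
variable [Finite C] (ar : F → ℕ) (Δ : List (Rule C F)) (M : TE C)

def argN : Arg C → ℕ
  | .param _ => 0
  | .con _ is => is.length

def NN : ℕ := (Δ.flatMap fun r => r.args.map argN).foldr max 0

theorem argN_le_NN {r : Rule C F} {a : Arg C} (hr : r ∈ Δ) (ha : a ∈ r.args) :
    argN a ≤ NN Δ :=
  le_foldr_max (by simp [List.mem_flatMap]; exact ⟨r, hr, a, ha, rfl⟩)

def P0 : List (TE C) := .top :: subs M

noncomputable def Clist : List C :=
  (@Finset.univ C (Fintype.ofFinite C)).toList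

theorem mem_Clist (c : C) : c ∈ Clist := by
  letI := Fintype.ofFinite C
  simp [Clist]

noncomputable def Tlist : List (TE C) :=
  P0 M ++ (Clist.flatMap fun d => (listsLE (P0 M) (NN Δ)).map (TE.con d))

theorem top_mem_Tlist : TE.top ∈ Tlist Δ M := by simp [Tlist, P0]

theorem M_mem_Tlist : M ∈ Tlist Δ M := by
  simp [Tlist, P0]
  right; left; exact self_mem_subs M

theorem subs_sub_Tlist {E : TE C} (h : E ∈ subs M) : E ∈ Tlist Δ M := by
  simp [Tlist, P0]; right; left; exact h

theorem P0_sub_Tlist {E : TE C} (h : E ∈ P0 M) : E ∈ Tlist Δ M := by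
  simp [Tlist]; left; exact h

theorem mem_Tlist_cases {E : TE C} (h : E ∈ Tlist Δ M) :
    E = .top ∨ E ∈ subs M ∨ ∃ d L, L ∈ listsLE (P0 M) (NN Δ) ∧ E = .con d L := by
  rcases List.mem_append.1 h with h | h
  · rcases List.mem_cons.1 h with h | h
    · exact Or.inl h
    · exact Or.inr (Or.inl h)
  · rw [List.mem_flatMap] at h
    obtain ⟨d, _, h⟩ := h
    rw [List.mem_map] at h
    obtain ⟨L, hL, rfl⟩ := h
    exact Or.inr (Or.inr ⟨d, L, hL, rfl⟩)

theorem and_closure {a b : TE C} (h : TE.and a b ∈ Tlist Δ M) :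
    a ∈ Tlist Δ M ∧ b ∈ Tlist Δ M := by
  rcases mem_Tlist_cases Δ M h with h | h | ⟨d, L, _, hL⟩
  · simp at h
  · constructor <;> apply subs_sub_Tlist
    · exact subs_trans M _ h a (by simp [subs, self_mem_subs])
    · exact subs_trans M _ h b (by simp [subs, self_mem_subs])
  · simp at hL

theorem or_closure {a b : TE C} (h : TE.or a b ∈ Tlist Δ M) :
    a ∈ Tlist Δ M ∧ b ∈ Tlist Δ M := by
  rcases mem_Tlist_cases Δ M h with h | h | ⟨d, L, _, hL⟩
  · simp at h
  · constructor <;> apply subs_sub_Tlist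
    · exact subs_trans M _ h a (by simp [subs, self_mem_subs])
    · exact subs_trans M _ h b (by simp [subs, self_mem_subs])
  · simp at hL

theorem not_closure {a : TE C} (h : TE.not a ∈ Tlist Δ M) : a ∈ Tlist Δ M := by
  rcases mem_Tlist_cases Δ M h with h | h | ⟨d, L, _, hL⟩
  · simp at h
  · exact subs_sub_Tlist Δ M (subs_trans M _ h a (by simp [subs, self_mem_subs]))
  · simp at hL

theorem con_entries {c : C} {Es : List (TE C)} (h : TE.con c Es ∈ Tlist Δ M) :
    ∀ x ∈ Es, x ∈ P0 M := by
  rcases mem_Tlist_cases Δ M h with h | h | ⟨d, L, hL, hcon⟩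
  · simp at h
  · intro x hx
    simp [P0]
    right
    refine subs_trans M _ h x ?_
    simp [subs]
    right
    exact ⟨x, hx, self_mem_subs x⟩
  · obtain ⟨rfl, rfl⟩ : d = c ∧ L = Es := by
      injection hcon with h1 h2; exact ⟨h1.symm, h2.symm⟩
    exact of_mem_listsLE hL

theorem getD_mem_P0 {Es : List (TE C)} (hEs : ∀ x ∈ Es, x ∈ P0 M) (i : ℕ) :
    Es.getD i .top ∈ P0 M := by
  by_cases hi : i < Es.length
  · rw [List.getD_eq_getElem _ _ hi]; exact hEs _ (List.getElem_mem hi)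
  · rw [List.getD_eq_default _ _ (by omega)]; simp [P0]

theorem substArg_closure {c : C} {Es : List (TE C)} {r : Rule C F} {a : Arg C}
    (h : TE.con c Es ∈ Tlist Δ M) (hr : r ∈ Δ) (ha : a ∈ r.args) :
    substArg a Es ∈ Tlist Δ M := by
  have hEs := con_entries Δ M h
  match a with
  | .param i =>
    exact P0_sub_Tlist Δ M (getD_mem_P0 M hEs i)
  | .con d is =>
    rw [substArg]
    apply List.mem_append.2
    right
    rw [List.mem_flatMap]
    refine ⟨d, mem_Clist d, ?_⟩
    rw [List.mem_map]
    refine ⟨is.map (fun i => Es.getD i .top), ?_, rfl⟩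
    refine mem_listsLE ?_ ?_
    · simpa [argN] using argN_le_NN Δ hr ha
    · intro x hx
      rw [List.mem_map] at hx
      obtain ⟨i, _, rfl⟩ := hx
      exact getD_mem_P0 M hEs i

theorem finite_TT : Finite {E : TE C // E ∈ Tlist Δ M} :=
  (Tlist Δ M).finite_toSet.to_subtype

noncomputable def ext (g : {E : TE C // E ∈ Tlist Δ M} → Bool) (E : TE C) : Bool :=
  letI := Classical.dec (E ∈ Tlist Δ M)
  if h : E ∈ Tlist Δ M then g ⟨E, h⟩ else false

def Phi (f : F) (rs : List (TE C → Bool)) (gg : TE C → Bool) : TE C → Prop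
  | .top => True
  | .bot => False
  | .and a b => gg a = true ∧ gg b = true
  | .or a b => gg a = true ∨ gg b = true
  | .not a => ¬ (gg a = true)
  | .con c Es => ∃ r ∈ Δ, r.c = c ∧ r.f = f ∧ r.args.length = rs.length ∧
      ∀ p ∈ rs.zip (r.args.map (substArg · Es)), p.1 p.2 = true

def delta (f : F) (qs : List ({E : TE C // E ∈ Tlist Δ M} → Bool))
    (g : {E : TE C // E ∈ Tlist Δ M} → Bool) : Prop :=
  qs.length = ar f ∧ ∀ E ∈ Tlist Δ M,
    (ext Δ M g E = true ↔ Phi Δ f (qs.map (ext Δ M)) (ext Δ M g) E)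

theorem ext_eq {g : {E : TE C // E ∈ Tlist Δ M} → Bool} {E : TE C} (h : E ∈ Tlist Δ M) :
    ext Δ M g E = g ⟨E, h⟩ := by
  simp [ext, h]

theorem node_iff {f : F} {ts : List (Tm F)} {qs : List ({E : TE C // E ∈ Tlist Δ M} → Bool)}
    {g : {E : TE C // E ∈ Tlist Δ M} → Bool}
    (hlen : ts.length = qs.length)
    (hIH : ∀ p ∈ ts.zip qs, ∀ E ∈ Tlist Δ M, (ext Δ M p.2 E = true ↔ mem Δ p.1 E))
    (hδ : ∀ E ∈ Tlist Δ M, (ext Δ M g E = true ↔ Phi Δ f (qs.map (ext Δ M)) (ext Δ M g) E)) :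
    ∀ (E : TE C), E ∈ Tlist Δ M → (ext Δ M g E = true ↔ mem Δ (.app f ts) E) := by
  have hIH' := (forall_zip_iff (h := hlen.symm)
    (P := fun a b => ∀ E ∈ Tlist Δ M, (ext Δ M b E = true ↔ mem Δ a E))).1 hIH
  suffices H : ∀ (n : ℕ) (E : TE C), sizeOf E ≤ n → E ∈ Tlist Δ M →
      (ext Δ M g E = true ↔ mem Δ (.app f ts) E) by
    intro E hE; exact H (sizeOf E) E le_rfl hE
  intro n
  induction n with
  | zero => intro E hsz _; exfalso; cases E <;> simp at hsz
  | succ n IH =>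
    intro E hsz hE
    rw [hδ E hE]
    match E, hsz with
    | .top, _ => simp [Phi, mem]
    | .bot, _ => simp [Phi, mem]
    | .and a b, hsz =>
      obtain ⟨ha, hb⟩ := and_closure Δ M hE
      have Ha := IH a (by simp at hsz; omega) ha
      have Hb := IH b (by simp at hsz; omega) hb
      rw [hδ a ha] at Ha
      rw [hδ b hb] at Hb
      simp only [Phi, mem]
      rw [← hδ a ha, ← hδ b hb] at *
      constructor
      · rintro ⟨x, y⟩; exact ⟨Ha.1 x, Hb.1 y⟩
      · rintro ⟨x, y⟩; exact ⟨Ha.2 x, Hb.2 y⟩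
    | .or a b, hsz =>
      obtain ⟨ha, hb⟩ := or_closure Δ M hE
      have Ha := IH a (by simp at hsz; omega) ha
      have Hb := IH b (by simp at hsz; omega) hb
      simp only [Phi, mem]
      rw [Ha, Hb]
    | .not a, hsz =>
      have ha := not_closure Δ M hE
      have Ha := IH a (by simp at hsz; omega) ha
      simp only [Phi, mem]
      rw [Ha]
    | .con c Es, hsz =>
      simp only [Phi, mem]
      constructor
      · rintro ⟨r, hr, hc, hf, hlen', hall⟩
        have hlen'' : r.args.length = ts.length := by
          simp only [List.length_map] at hlen'; omega
        refine ⟨r, hr, hc, hf, hlen'', ?_⟩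
        rw [forall_zip_iff (l₁ := ts) (l₂ := r.args.map (substArg · Es))
          (P := fun a b => mem Δ a b)
          (h := by simp only [List.length_map]; omega)]
        intro i hi
        have hargmem : r.args[i]'(by omega) ∈ r.args := List.getElem_mem (by omega)
        have hsubmem : substArg (r.args[i]'(by omega)) Es ∈ Tlist Δ M :=
          substArg_closure Δ M hE hr hargmem
        have hall' := (forall_zip_iff (l₁ := qs.map (ext Δ M))
          (l₂ := r.args.map (substArg · Es))
          (P := fun (q : TE C → Bool) (e : TE C) => q e = true)
          (h := by simp only [List.length_map]; omega)).1 hall i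
          (by simp only [List.length_map]; omega)
        simp only [List.getElem_map] at hall' ⊢
        rw [← (hIH' i hi _ hsubmem)]
        exact hall'
      · rintro ⟨r, hr, hc, hf, hlen'', hall⟩
        refine ⟨r, hr, hc, hf, by simp only [List.length_map]; omega, ?_⟩
        rw [forall_zip_iff (l₁ := qs.map (ext Δ M))
          (l₂ := r.args.map (substArg · Es))
          (P := fun (q : TE C → Bool) (e : TE C) => q e = true)
          (h := by simp only [List.length_map]; omega)]
        intro i hi
        have hi' : i < ts.length := by simp only [List.length_map] at hi; omega
        have hargmem : r.args[i]'(by omega) ∈ r.args := List.getElem_mem (by omega)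
        have hsubmem : substArg (r.args[i]'(by omega)) Es ∈ Tlist Δ M :=
          substArg_closure Δ M hE hr hargmem
        have hall' := (forall_zip_iff (l₁ := ts) (l₂ := r.args.map (substArg · Es))
          (P := fun a b => mem Δ a b)
          (h := by simp only [List.length_map]; omega)).1 hall i hi'
        simp only [List.getElem_map] at hall' ⊢
        rw [(hIH' i hi' _ hsubmem)]
        exact hall'

theorem reach_sound {t : Tm F} {g : {E : TE C // E ∈ Tlist Δ M} → Bool}
    (h : Reach (delta ar Δ M) t g) :
    WF ar t ∧ ∀ E ∈ Tlist Δ M, (ext Δ M g E = true ↔ mem Δ t E) := by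
  induction h with
  | @app f ts qs q hlen hr hd ih =>
    obtain ⟨hq, hδ⟩ := hd
    constructor
    · refine WF.app (by omega) ?_
      intro t' ht'
      obtain ⟨i, hi, rfl⟩ := List.mem_iff_getElem.1 ht'
      have hmemz : (ts[i], qs[i]'(by omega)) ∈ ts.zip qs := by
        rw [List.mem_iff_getElem]
        refine ⟨i, by simp only [List.length_zip]; omega, ?_⟩
        simp [List.getElem_zip]
      exact (ih _ hmemz).1
    · exact node_iff Δ M hlen (fun p hp => (ih p hp).2) hδ

open Classical in
noncomputable def st (t : Tm F) : {E : TE C // E ∈ Tlist Δ M} → Bool :=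
  fun E => decide (mem Δ t E.1)

theorem ext_st (t : Tm F) {E : TE C} (hE : E ∈ Tlist Δ M) :
    (ext Δ M (st Δ M t) E = true ↔ mem Δ t E) := by
  rw [ext_eq Δ M hE]
  simp [st]

theorem reach_complete {t : Tm F} (h : WF ar t) :
    Reach (delta ar Δ M) t (st Δ M t) := by
  induction h with
  | @app f ts hlen hwf ih =>
    refine Reach.app (qs := ts.map (st Δ M)) (by simp) ?_ ?_
    · rw [forall_zip_iff (l₁ := ts) (l₂ := ts.map (st Δ M))
        (P := fun a b => Reach (delta ar Δ M) a b) (h := by simp)]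
      intro i hi
      simp only [List.getElem_map]
      exact ih _ (List.getElem_mem hi)
    · refine ⟨by simp [hlen], ?_⟩
      intro E hE
      rw [ext_st Δ M _ hE]
      match E with
      | .top => simp [Phi, mem]
      | .bot => simp [Phi, mem]
      | .and a b =>
        obtain ⟨ha, hb⟩ := and_closure Δ M hE
        simp only [Phi, mem]
        rw [ext_st Δ M _ ha, ext_st Δ M _ hb]
      | .or a b =>
        obtain ⟨ha, hb⟩ := or_closure Δ M hE
        simp only [Phi, mem]
        rw [ext_st Δ M _ ha, ext_st Δ M _ hb]
      | .not a =>
        have ha := not_closure Δ M hE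
        simp only [Phi, mem]
        rw [ext_st Δ M _ ha]
      | .con c Es =>
        simp only [Phi, mem]
        constructor
        · rintro ⟨r, hr, hc, hf, hlen', hall⟩
          refine ⟨r, hr, hc, hf, by simp only [List.length_map]; omega, ?_⟩
          rw [forall_zip_iff (l₁ := (ts.map (st Δ M)).map (ext Δ M))
            (l₂ := r.args.map (substArg · Es))
            (P := fun (q : TE C → Bool) (e : TE C) => q e = true)
            (h := by simp only [List.length_map]; omega)]
          intro i hi
          have hi' : i < ts.length := by simp only [List.length_map] at hi; omega
          have hargmem : r.args[i]'(by omega) ∈ r.args := List.getElem_mem (by omega)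
          have hsubmem : substArg (r.args[i]'(by omega)) Es ∈ Tlist Δ M :=
            substArg_closure Δ M hE hr hargmem
          have hall' := (forall_zip_iff (l₁ := ts) (l₂ := r.args.map (substArg · Es))
            (P := fun a b => mem Δ a b)
            (h := by simp only [List.length_map]; omega)).1 hall i hi'
          simp only [List.getElem_map] at hall' ⊢
          rw [ext_st Δ M _ hsubmem]
          exact hall'
        · rintro ⟨r, hr, hc, hf, hlen', hall⟩
          refine ⟨r, hr, hc, hf, by simp only [List.length_map] at hlen'; omega, ?_⟩
          rw [forall_zip_iff (l₁ := ts) (l₂ := r.args.map (substArg · Es))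
            (P := fun a b => mem Δ a b)
            (h := by simp only [List.length_map] at hlen' ⊢; omega)]
          intro i hi
          have hargmem : r.args[i]'(by simp only [List.length_map] at hlen'; omega) ∈ r.args :=
            List.getElem_mem _
          have hsubmem : substArg (r.args[i]'(by simp only [List.length_map] at hlen'; omega)) Es ∈ Tlist Δ M :=
            substArg_closure Δ M hE hr hargmem
          have hall' := (forall_zip_iff (l₁ := (ts.map (st Δ M)).map (ext Δ M))
            (l₂ := r.args.map (substArg · Es))
            (P := fun (q : TE C → Bool) (e : TE C) => q e = true)
            (h := by simp only [List.length_map] at hlen' ⊢; omega)).1 hall i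
            (by simp only [List.length_map] at hlen' ⊢; omega)
          simp only [List.getElem_map] at hall' ⊢
          rw [ext_st Δ M _ hsubmem] at hall'
          exact hall'


/-- For every type expression `M` over a finite set `Π = C` of type
constructors and a finite, simplified, type-preserving set `Δ` of parametric
production rules over a finite ranked alphabet `Σ = F`, the denotation `⟦M⟧` (as a set of ground terms over `Σ`, i.e. well-formed terms) is a
regular term language over `Σ`, i.e. recognisable by a finite tree automaton. -/
theorem denotation_regular {C F : Type} [Finite C] [Finite F] (ar : F → ℕ)
    (Δ : List (Rule C F)) (M : TE C) :
    Regular ar {t : Tm F | WF ar t ∧ mem Δ t M} := by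
  haveI : Finite {E : TE C // E ∈ Tlist Δ M} := finite_TT Δ M
  refine ⟨({E : TE C // E ∈ Tlist Δ M} → Bool), inferInstance, delta ar Δ M,
    {g | g ⟨M, M_mem_Tlist Δ M⟩ = true}, ?_, ?_⟩
  · exact fun f qs q hd => hd.1
  · intro t
    constructor
    · rintro ⟨hwf, hm⟩
      refine ⟨st Δ M t, ?_, reach_complete ar Δ M hwf⟩
      have := (ext_st Δ M t (M_mem_Tlist Δ M)).2 hm
      rw [ext_eq Δ M (M_mem_Tlist Δ M)] at this
      exact this
    · rintro ⟨q, hq, hr⟩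
      obtain ⟨hwf, hiff⟩ := reach_sound ar Δ M hr
      refine ⟨hwf, ?_⟩
      rw [← hiff M (M_mem_Tlist Δ M)]
      rw [ext_eq Δ M (M_mem_Tlist Δ M)]
      exact hq
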